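/- Let G be a finite connected graph, with d and D the minimum and maximum of γ_{2,2}(Ḡ) over all orientations Ḡ of G. Then for every integer b with d ≤ b ≤ D, there exists an orientation Ḡ_b of G with γ_{2,2}(Ḡ_b) = b. -/

import Mathlib

open Finset

/-- `DReach A n u v`: there is a directed walk of length `n` from `u` to `v`
in the digraph with arc relation `A`. -/
def DReach {V : Type*} (A : V → V → Prop) : ℕ → V → V → Prop
  | 0, u, v => u = v
  | n + 1, u, v => ∃ w, A u w ∧ DReach A n w v

/-- The signal a broadcasting vertex `u` of strength `t` sends to `w`:
`t - d(u,w)` where `d` is the directed distance (0 if `d(u,w) ≥ t` or `w` unreachable). -/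
noncomputable def dsignal {V : Type*} (A : V → V → Prop) (t : ℕ) (u w : V) : ℕ :=
  sSup {m : ℕ | ∃ n : ℕ, DReach A n u w ∧ m = t - n}

/-- The directed reception at `w` from the broadcast set `S` of strength `t`. -/
noncomputable def dreception {V : Type*} [Fintype V] (A : V → V → Prop) (t : ℕ)
    (S : Finset V) (w : V) : ℕ :=
  ∑ v ∈ S, dsignal A t v w

/-- `S` is a directed `(t,r)` broadcast dominating set of the digraph `A`. -/
def IsDomSet {V : Type*} [Fintype V] (A : V → V → Prop) (t r : ℕ) (S : Finset V) : Prop :=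
  ∀ w : V, r ≤ dreception A t S w

/-- The directed `(t,r)` broadcast domination number of the digraph `A`. -/
noncomputable def gamma {V : Type*} [Fintype V] (A : V → V → Prop) (t r : ℕ) : ℕ :=
  sInf {k : ℕ | ∃ S : Finset V, IsDomSet A t r S ∧ S.card = k}

/-- `A` is an orientation of the simple graph `G`: every arc is along an edge of `G`,
and each edge of `G` is directed in exactly one of the two directions. -/
def IsOrientation {V : Type*} (G : SimpleGraph V) (A : V → V → Prop) : Prop :=
  (∀ u v, A u v → G.Adj u v) ∧ ∀ u v, G.Adj u v → (A u v ↔ ¬ A v u)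

/-- `A₁` is obtained from `A₀` by reversing (flipping) a single arc. -/
def OneFlip {V : Type*} (A₀ A₁ : V → V → Prop) : Prop :=
  ∃ a b, A₀ a b ∧ A₁ b a ∧
    ∀ u v, ¬((u = a ∧ v = b) ∨ (u = b ∧ v = a)) → (A₀ u v ↔ A₁ u v)

/-- The star graph on `n` vertices: vertex with value `0` is the center. -/
def starGraph (n : ℕ) : SimpleGraph (Fin n) where
  Adj u v := u ≠ v ∧ (u.val = 0 ∨ v.val = 0)
  symm := by constructor; intro u v h; exact ⟨h.1.symm, h.2.symm⟩
  loopless := by constructor; intro u h; exact h.1 rfl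

section Aux
set_option linter.unusedSectionVars false
open scoped Classical
variable {V : Type*}

lemma dsignal_eq' (A : V → V → Prop) (u w : V) :
    dsignal A 2 u w = if u = w then 2 else if A u w then 1 else 0 := by
  unfold dsignal
  split_ifs with h1 h2
  · subst h1
    apply le_antisymm
    · exact csSup_le' (by rintro m ⟨n, _, rfl⟩; omega)
    · exact le_csSup ⟨2, by rintro m ⟨n, _, rfl⟩; omega⟩ ⟨0, rfl, rfl⟩
  · apply le_antisymm
    · apply csSup_le'
      rintro m ⟨n, hn, rfl⟩
      match n with
      | 0 => exact absurd hn h1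
      | n+1 => omega
    · exact le_csSup ⟨2, by rintro m ⟨n, _, rfl⟩; omega⟩ ⟨1, ⟨w, h2, rfl⟩, rfl⟩
  · apply le_antisymm
    · apply csSup_le'
      rintro m ⟨n, hn, rfl⟩
      match n with
      | 0 => exact absurd hn h1
      | 1 => obtain ⟨x, hx, hx0⟩ := hn; cases hx0; exact absurd hx h2
      | n+2 => omega
    · exact Nat.zero_le _

variable [Fintype V]

lemma univ_domset (A : V → V → Prop) : IsDomSet A 2 2 Finset.univ := by
  intro w
  calc (2 : ℕ) = dsignal A 2 w w := by rw [dsignal_eq']; simp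
  _ ≤ _ := Finset.single_le_sum (f := fun v => dsignal A 2 v w)
      (fun i _ => Nat.zero_le _) (Finset.mem_univ w)

lemma gamma_exists (A : V → V → Prop) :
    ∃ S : Finset V, IsDomSet A 2 2 S ∧ S.card = gamma A 2 2 := by
  have h : (gamma A 2 2) ∈ {k : ℕ | ∃ S : Finset V, IsDomSet A 2 2 S ∧ S.card = k} :=
    Nat.sInf_mem ⟨_, Finset.univ, univ_domset A, rfl⟩
  exact h

lemma gamma_le_card {A : V → V → Prop} {S : Finset V} (h : IsDomSet A 2 2 S) :
    gamma A 2 2 ≤ S.card := Nat.sInf_le ⟨S, h, rfl⟩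

lemma OneFlip.symm {A A' : V → V → Prop} (h : OneFlip A A') : OneFlip A' A := by
  obtain ⟨a, b, hab, hba, hoth⟩ := h
  exact ⟨b, a, hba, hab, fun u v huv => (hoth u v (by tauto)).symm⟩

lemma gamma_flip_le (A A' : V → V → Prop) (h : OneFlip A A') :
    gamma A' 2 2 ≤ gamma A 2 2 + 1 := by
  obtain ⟨a, b, hab, hba, hoth⟩ := h
  obtain ⟨S, hS, hcard⟩ := gamma_exists A
  have hdom : IsDomSet A' 2 2 (insert b S) := by
    intro w
    by_cases hw : w = b
    · have hwmem : w ∈ insert b S := by rw [hw]; exact Finset.mem_insert_self b S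
      calc (2:ℕ) = dsignal A' 2 w w := by rw [dsignal_eq']; simp
      _ ≤ _ := Finset.single_le_sum (f := fun v => dsignal A' 2 v w)
          (fun i _ => Nat.zero_le _) hwmem
    · calc (2:ℕ) ≤ dreception A 2 S w := hS w
      _ ≤ dreception A' 2 S w := by
          apply Finset.sum_le_sum
          intro v _
          rw [dsignal_eq', dsignal_eq']
          split_ifs with h1 h2 h3 <;> try omega
          exfalso
          apply h3
          by_cases hba' : v = b ∧ w = a
          · exact hba'.1 ▸ hba'.2 ▸ hba
          · exact (hoth v w (by tauto)).mp h2
      _ ≤ _ := Finset.sum_le_sum_of_subset (Finset.subset_insert _ _)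
  calc gamma A' 2 2 ≤ (insert b S).card := gamma_le_card hdom
  _ ≤ S.card + 1 := Finset.card_insert_le _ _
  _ = gamma A 2 2 + 1 := by rw [hcard]

/-- flip the arc `a → b` -/
def flipRel (A : V → V → Prop) (a b : V) (u v : V) : Prop :=
  (u = b ∧ v = a) ∨ (A u v ∧ ¬(u = a ∧ v = b) ∧ ¬(u = b ∧ v = a))

lemma oneFlip_flipRel {A : V → V → Prop} {a b : V} (hab : A a b) :
    OneFlip A (flipRel A a b) := by
  refine ⟨a, b, hab, Or.inl ⟨rfl, rfl⟩, fun u v huv => ?_⟩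
  unfold flipRel
  tauto

lemma isOrientation_flipRel {G : SimpleGraph V} {A : V → V → Prop}
    (hA : IsOrientation G A) {a b : V} (hab : A a b) :
    IsOrientation G (flipRel A a b) := by
  have hadjab : G.Adj a b := hA.1 a b hab
  have hne : a ≠ b := hadjab.ne
  constructor
  · rintro u v (⟨rfl, rfl⟩ | ⟨h, _, _⟩)
    · exact hadjab.symm
    · exact hA.1 u v h
  · intro u v hadj
    have h1 := hA.2 u v hadj
    have h2 := hA.2 v u hadj.symm
    have hne' : u ≠ v := hadj.ne
    have hnAba : ¬ A b a := (hA.2 a b hadjab).mp hab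
    unfold flipRel
    by_cases h3 : u = a <;> by_cases h4 : u = b <;> by_cases h5 : v = a <;>
      by_cases h6 : v = b <;> subst_vars <;> tauto

noncomputable def diffSet (A A' : V → V → Prop) : Finset (V × V) :=
  Finset.univ.filter fun p => A p.1 p.2 ∧ ¬ A' p.1 p.2

lemma gamma_eq_of_diff_empty {G : SimpleGraph V} {A A' : V → V → Prop}
    (hA : IsOrientation G A) (hA' : IsOrientation G A')
    (h : diffSet A A' = ∅) : gamma A 2 2 = gamma A' 2 2 := by
  have key : ∀ u v, A u v ↔ A' u v := by
    intro u v
    have hmem : ∀ x y : V, A x y → A' x y := by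
      intro x y hxy
      by_contra hc
      have : (x, y) ∈ diffSet A A' := by simp [diffSet, hxy, hc]
      simp [h] at this
    constructor
    · exact hmem u v
    · intro h'
      by_contra hc
      have hadj : G.Adj u v := hA'.1 u v h'
      have hvu : A v u := ((hA.2 v u hadj.symm).mpr hc)
      have : A' v u := hmem v u hvu
      exact (hA'.2 v u hadj.symm).mp this h'
  have : A = A' := funext fun u => funext fun v => propext (key u v)
  rw [this]

lemma diffSet_flip {G : SimpleGraph V} {A A' : V → V → Prop}
    (hA : IsOrientation G A) (hA' : IsOrientation G A')
    {a b : V} (hmem : (a, b) ∈ diffSet A A') :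
    diffSet (flipRel A a b) A' = (diffSet A A').erase (a, b) := by
  simp only [diffSet, Finset.mem_filter, Finset.mem_univ, true_and] at hmem
  obtain ⟨hab, hnab⟩ := hmem
  have hadj : G.Adj a b := hA.1 a b hab
  have hne : a ≠ b := hadj.ne
  have hA'ba : A' b a := (hA'.2 b a hadj.symm).mpr hnab
  have hnAba : ¬ A b a := (hA.2 a b hadj).mp hab
  ext ⟨u, v⟩
  simp only [diffSet, Finset.mem_erase, Finset.mem_filter]
  simp only [diffSet, Finset.mem_erase, Finset.mem_filter, Finset.mem_univ, true_and,
    flipRel, Prod.mk.injEq, ne_eq]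
  constructor
  · rintro ⟨(⟨rfl, rfl⟩ | ⟨hA1, hc1, hc2⟩), hA2⟩
    · exact absurd hA'ba hA2
    · exact ⟨by tauto, hA1, hA2⟩
  · rintro ⟨hne', hA1, hA2⟩
    refine ⟨Or.inr ⟨hA1, ?_, ?_⟩, hA2⟩
    · tauto
    · rintro ⟨rfl, rfl⟩; exact hnAba hA1

lemma ivt_aux (G : SimpleGraph V) (A' : V → V → Prop) (hA' : IsOrientation G A') :
    ∀ n (A : V → V → Prop), IsOrientation G A → (diffSet A A').card = n →
    ∀ b, gamma A 2 2 ≤ b → b ≤ gamma A' 2 2 →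
    ∃ B : V → V → Prop, IsOrientation G B ∧ gamma B 2 2 = b := by
  intro n
  induction n with
  | zero =>
    intro A hA hcard b hb1 hb2
    have heq : gamma A 2 2 = gamma A' 2 2 :=
      gamma_eq_of_diff_empty hA hA' (Finset.card_eq_zero.mp hcard)
    exact ⟨A, hA, by omega⟩
  | succ n ih =>
    intro A hA hcard b hb1 hb2
    rcases eq_or_lt_of_le hb1 with heq | hlt
    · exact ⟨A, hA, heq⟩
    · have hne : (diffSet A A').Nonempty := Finset.card_pos.mp (by omega)
      obtain ⟨⟨x, y⟩, hp⟩ := hne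
      have hxy : A x y := by
        simpa [diffSet] using (Finset.mem_filter.mp hp).2.1
      set A₂ := flipRel A x y with hA₂def
      have horient₂ : IsOrientation G A₂ := isOrientation_flipRel hA hxy
      have hflip : OneFlip A A₂ := oneFlip_flipRel hxy
      have hle : gamma A₂ 2 2 ≤ gamma A 2 2 + 1 := gamma_flip_le A A₂ hflip
      have hcard₂ : (diffSet A₂ A').card = n := by
        rw [hA₂def, diffSet_flip hA hA' hp, Finset.card_erase_of_mem hp, hcard]
        omega
      exact ih A₂ horient₂ hcard₂ b (by omega) hb2

end Aux

theorem stmt3 {V : Type*} [Fintype V] (G : SimpleGraph V) (hconn : G.Connected)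
    (d D : ℕ)
    (hd : IsLeast {k : ℕ | ∃ A : V → V → Prop, IsOrientation G A ∧ gamma A 2 2 = k} d)
    (hD : IsGreatest {k : ℕ | ∃ A : V → V → Prop, IsOrientation G A ∧ gamma A 2 2 = k} D) :
    ∀ b : ℕ, d ≤ b → b ≤ D →
      ∃ A : V → V → Prop, IsOrientation G A ∧ gamma A 2 2 = b := by
  intro b hdb hbD
  obtain ⟨Amin, hmin, hγmin⟩ := hd.1
  obtain ⟨Amax, hmax, hγmax⟩ := hD.1
  exact ivt_aux G Amax hmax (diffSet Amin Amax).card Amin hmin rfl b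
    (by omega) (by omega)
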